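/- Let a, b, c ∈ ℝ, let U ⊆ ℝ³×ℝ be open, and let u : U → ℝ³, Q : U → 𝒮₀ be smooth maps satisfying the co-rotational Q-tensor equation ∂_tQ + u·∇Q − ωQ + Qω = ΔQ − f_LdG(Q) on U, where ω := (∇u − (∇u)ᵀ)/2. Then pointwise on U: ∂_t tr(Q²) + u·∇ tr(Q²) = Δ tr(Q²) − 2|∇Q|² − 2( a tr(Q²) − b tr(Q³) + c (tr(Q²))² ), where |∇Q|² := ∑_α ∂_αQ:∂_αQ and Δ, ∇ act in the space variable. -/

import Mathlib

noncomputable section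
open Matrix

/-- Euclidean 3-space. -/
abbrev E3 : Type := EuclideanSpace ℝ (Fin 3)
/-- Real 3×3 matrices. -/
abbrev M3 : Type := Matrix (Fin 3) (Fin 3) ℝ

/-- Spatial partial derivative `∂_α f` of a scalar function on `ℝ³ × ℝ`. -/
def pdx (α : Fin 3) (f : E3 × ℝ → ℝ) (p : E3 × ℝ) : ℝ :=
  fderiv ℝ (fun y => f (y, p.2)) p.1 (EuclideanSpace.single α 1)

/-- Time derivative `∂_t f` of a scalar function on `ℝ³ × ℝ`. -/
def pdt (f : E3 × ℝ → ℝ) (p : E3 × ℝ) : ℝ := deriv (fun s => f (p.1, s)) p.2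

/-- Spatial Laplacian `Δf` of a scalar function on `ℝ³ × ℝ`. -/
def lapx (f : E3 × ℝ → ℝ) (p : E3 × ℝ) : ℝ := ∑ α, pdx α (fun q => pdx α f q) p

/-- The Landau–De Gennes bulk force
`f_LdG(Q) = aQ − b(Q² − (tr(Q²)/3)I₃) + c·tr(Q²)·Q`. -/
def fLdG (a b c : ℝ) (Q : M3) : M3 :=
  a • Q - b • (Q * Q - ((Q * Q).trace / 3) • (1 : M3)) + (c * (Q * Q).trace) • Q

/-- Vorticity `ω = (∇u − (∇u)ᵀ)/2`, with `(∇u)_{αβ} = ∂_β u_α`. -/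
def omg (u : E3 × ℝ → Fin 3 → ℝ) (p : E3 × ℝ) (α β : Fin 3) : ℝ :=
  (pdx β (fun q => u q α) p - pdx α (fun q => u q β) p) / 2

section helpers
variable {U : Set (E3 × ℝ)} {p : E3 × ℝ} {f g : E3 × ℝ → ℝ}

lemma diffAt_of (hU : IsOpen U) (hp : p ∈ U) (hf : ContDiffOn ℝ (⊤ : ℕ∞) f U) :
    DifferentiableAt ℝ f p :=
  (hf.contDiffAt (hU.mem_nhds hp)).differentiableAt (by simp)

lemma sliceX_diffAt (hU : IsOpen U) (hp : p ∈ U) (hf : ContDiffOn ℝ (⊤ : ℕ∞) f U) :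
    DifferentiableAt ℝ (fun y => f (y, p.2)) p.1 := by
  have h1 : DifferentiableAt ℝ f (p.1, p.2) := by
    rw [Prod.mk.eta]; exact diffAt_of hU hp hf
  exact h1.comp p.1 (differentiableAt_id.prodMk (differentiableAt_const _))

lemma sliceT_diffAt (hU : IsOpen U) (hp : p ∈ U) (hf : ContDiffOn ℝ (⊤ : ℕ∞) f U) :
    DifferentiableAt ℝ (fun s => f (p.1, s)) p.2 := by
  have h1 : DifferentiableAt ℝ f (p.1, p.2) := by
    rw [Prod.mk.eta]; exact diffAt_of hU hp hf
  exact h1.comp p.2 ((differentiableAt_const _).prodMk differentiableAt_id)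

lemma pdx_congr_on {γ : Fin 3} (hU : IsOpen U) (hp : p ∈ U) (h : ∀ q ∈ U, f q = g q) :
    pdx γ f p = pdx γ g p := by
  unfold pdx
  have hV : IsOpen {y : E3 | (y, p.2) ∈ U} :=
    hU.preimage (Continuous.prodMk continuous_id continuous_const)
  have hev : (fun y => f (y, p.2)) =ᶠ[nhds p.1] (fun y => g (y, p.2)) :=
    Filter.eventuallyEq_of_mem (hV.mem_nhds hp) (fun y hy => h _ hy)
  rw [hev.fderiv_eq]

lemma pdt_mul (hU : IsOpen U) (hp : p ∈ U) (hf : ContDiffOn ℝ (⊤ : ℕ∞) f U)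
    (hg : ContDiffOn ℝ (⊤ : ℕ∞) g U) :
    pdt (fun q => f q * g q) p = pdt f p * g p + f p * pdt g p := by
  unfold pdt
  have := deriv_fun_mul (sliceT_diffAt hU hp hf) (sliceT_diffAt hU hp hg)
  simp only [Prod.mk.eta] at this
  rw [this]

lemma pdx_mul {γ : Fin 3} (hU : IsOpen U) (hp : p ∈ U) (hf : ContDiffOn ℝ (⊤ : ℕ∞) f U)
    (hg : ContDiffOn ℝ (⊤ : ℕ∞) g U) :
    pdx γ (fun q => f q * g q) p = pdx γ f p * g p + f p * pdx γ g p := by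
  unfold pdx
  have := fderiv_fun_mul (sliceX_diffAt hU hp hf) (sliceX_diffAt hU hp hg)
  simp only [Prod.mk.eta] at this
  rw [this]
  simp [ContinuousLinearMap.add_apply, ContinuousLinearMap.smul_apply, smul_eq_mul]
  ring

lemma pdx_add {γ : Fin 3} (hU : IsOpen U) (hp : p ∈ U) (hf : ContDiffOn ℝ (⊤ : ℕ∞) f U)
    (hg : ContDiffOn ℝ (⊤ : ℕ∞) g U) :
    pdx γ (fun q => f q + g q) p = pdx γ f p + pdx γ g p := by
  unfold pdx
  rw [fderiv_fun_add (sliceX_diffAt hU hp hf) (sliceX_diffAt hU hp hg)]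
  simp

lemma pdt_sum {ι : Type*} (s : Finset ι) (F : ι → E3 × ℝ → ℝ) (hU : IsOpen U) (hp : p ∈ U)
    (hF : ∀ i ∈ s, ContDiffOn ℝ (⊤ : ℕ∞) (F i) U) :
    pdt (fun q => ∑ i ∈ s, F i q) p = ∑ i ∈ s, pdt (F i) p := by
  unfold pdt
  rw [deriv_fun_sum (fun i hi => sliceT_diffAt hU hp (hF i hi))]

lemma pdx_sum {ι : Type*} {γ : Fin 3} (s : Finset ι) (F : ι → E3 × ℝ → ℝ) (hU : IsOpen U)
    (hp : p ∈ U) (hF : ∀ i ∈ s, ContDiffOn ℝ (⊤ : ℕ∞) (F i) U) :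
    pdx γ (fun q => ∑ i ∈ s, F i q) p = ∑ i ∈ s, pdx γ (F i) p := by
  unfold pdx
  rw [fderiv_fun_sum (fun i hi => sliceX_diffAt hU hp (hF i hi))]
  simp

lemma pdx_eq_fderiv {γ : Fin 3} (hU : IsOpen U) (hp : p ∈ U) (hf : ContDiffOn ℝ (⊤ : ℕ∞) f U) :
    pdx γ f p = fderiv ℝ f p ((EuclideanSpace.single γ 1 : E3), (0 : ℝ)) := by
  have hD : DifferentiableAt ℝ f (p.1, p.2) := by rw [Prod.mk.eta]; exact diffAt_of hU hp hf
  have h1 : HasFDerivAt (fun y : E3 => (y, p.2)) (ContinuousLinearMap.inl ℝ E3 ℝ) p.1 :=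
    hasFDerivAt_prodMk_left p.1 p.2
  have h2 : HasFDerivAt (fun y : E3 => f (y, p.2))
      ((fderiv ℝ f (p.1, p.2)).comp (ContinuousLinearMap.inl ℝ E3 ℝ)) p.1 :=
    hD.hasFDerivAt.comp p.1 h1
  unfold pdx
  rw [h2.fderiv]
  simp [Prod.mk.eta]

lemma pdx_contDiffOn {γ : Fin 3} (hU : IsOpen U) (hf : ContDiffOn ℝ (⊤ : ℕ∞) f U) :
    ContDiffOn ℝ (⊤ : ℕ∞) (fun q => pdx γ f q) U := by
  have h1 : ContDiffOn ℝ (⊤ : ℕ∞) (fderiv ℝ f) U :=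
    hf.fderiv_of_isOpen hU (le_of_eq (by rfl))
  have h2 : ContDiffOn ℝ (⊤ : ℕ∞)
      (fun q => fderiv ℝ f q ((EuclideanSpace.single γ 1 : E3), (0 : ℝ))) U :=
    h1.clm_apply contDiffOn_const
  exact h2.congr fun q hq => pdx_eq_fderiv hU hq hf

end helpers

/-- For smooth `u, Q` on an open `U ⊆ ℝ³×ℝ` with `Q` valued in symmetric
traceless matrices and solving the co-rotational Q-tensor equation, one has pointwise on `U`:
`∂_t tr(Q²) + u·∇ tr(Q²) = Δ tr(Q²) − 2|∇Q|² − 2(a tr(Q²) − b tr(Q³) + c (tr(Q²))²)`. -/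
theorem statement_4 (a b c : ℝ) (U : Set (E3 × ℝ)) (hU : IsOpen U)
    (u : E3 × ℝ → Fin 3 → ℝ) (Q : E3 × ℝ → M3)
    (hu : ∀ i, ContDiffOn ℝ (⊤ : ℕ∞) (fun p => u p i) U)
    (hQ : ∀ γ δ : Fin 3, ContDiffOn ℝ (⊤ : ℕ∞) (fun p => Q p γ δ) U)
    (hQsym : ∀ p ∈ U, (Q p).IsSymm) (hQtr : ∀ p ∈ U, (Q p).trace = 0)
    (heq : ∀ p ∈ U, ∀ α β : Fin 3,
      pdt (fun q => Q q α β) p + (∑ γ, u p γ * pdx γ (fun q => Q q α β) p)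
          - (∑ γ, omg u p α γ * Q p γ β) + (∑ γ, Q p α γ * omg u p γ β)
        = lapx (fun q => Q q α β) p - fLdG a b c (Q p) α β) :
    ∀ p ∈ U,
      pdt (fun q => (Q q * Q q).trace) p
          + (∑ γ, u p γ * pdx γ (fun q => (Q q * Q q).trace) p)
        = lapx (fun q => (Q q * Q q).trace) p
          - 2 * (∑ α, ∑ γ, ∑ δ, (pdx α (fun q => Q q γ δ) p) ^ 2)
          - 2 * (a * (Q p * Q p).trace - b * (Q p * Q p * Q p).trace
              + c * ((Q p * Q p).trace) ^ 2) := by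
  intro p hp
  have hfun : (fun q => (Q q * Q q).trace) = (fun q => ∑ α, ∑ β, Q q α β * Q q β α) := by
    funext q
    simp [Matrix.trace, Matrix.mul_apply, Matrix.diag]
  rw [hfun]
  -- time derivative
  have A1 : pdt (fun q => ∑ α, ∑ β, Q q α β * Q q β α) p
      = ∑ α, ∑ β, (pdt (fun q => Q q α β) p * Q p β α + Q p α β * pdt (fun q => Q q β α) p) := by
    rw [pdt_sum Finset.univ _ hU hp (fun α _ => ContDiffOn.sum fun β _ => (hQ α β).mul (hQ β α))]
    refine Finset.sum_congr rfl fun α _ => ?_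
    rw [pdt_sum Finset.univ _ hU hp (fun β _ => (hQ α β).mul (hQ β α))]
    exact Finset.sum_congr rfl fun β _ => pdt_mul hU hp (hQ α β) (hQ β α)
  -- first spatial derivatives, on all of U
  have A2 : ∀ q ∈ U, ∀ γ : Fin 3,
      pdx γ (fun q' => ∑ α, ∑ β, Q q' α β * Q q' β α) q
        = ∑ α, ∑ β, (pdx γ (fun q' => Q q' α β) q * Q q β α
            + Q q α β * pdx γ (fun q' => Q q' β α) q) := by
    intro q hq γ
    rw [pdx_sum Finset.univ _ hU hq (fun α _ => ContDiffOn.sum fun β _ => (hQ α β).mul (hQ β α))]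
    refine Finset.sum_congr rfl fun α _ => ?_
    rw [pdx_sum Finset.univ _ hU hq (fun β _ => (hQ α β).mul (hQ β α))]
    exact Finset.sum_congr rfl fun β _ => pdx_mul hU hq (hQ α β) (hQ β α)
  -- Laplacian
  have A3 : lapx (fun q => ∑ α, ∑ β, Q q α β * Q q β α) p
      = ∑ γ : Fin 3, ∑ α, ∑ β,
          ((pdx γ (fun q => pdx γ (fun q' => Q q' α β) q) p * Q p β α
              + pdx γ (fun q' => Q q' α β) p * pdx γ (fun q' => Q q' β α) p)
            + (pdx γ (fun q' => Q q' α β) p * pdx γ (fun q' => Q q' β α) p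
              + Q p α β * pdx γ (fun q => pdx γ (fun q' => Q q' β α) q) p)) := by
    unfold lapx
    refine Finset.sum_congr rfl fun γ _ => ?_
    rw [pdx_congr_on hU hp (fun q hq => A2 q hq γ)]
    rw [pdx_sum Finset.univ _ hU hp (fun α _ => ContDiffOn.sum fun β _ =>
      ((pdx_contDiffOn hU (hQ α β)).mul (hQ β α)).add
        ((hQ α β).mul (pdx_contDiffOn hU (hQ β α))))]
    refine Finset.sum_congr rfl fun α _ => ?_
    rw [pdx_sum Finset.univ _ hU hp (fun β _ =>
      ((pdx_contDiffOn hU (hQ α β)).mul (hQ β α)).add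
        ((hQ α β).mul (pdx_contDiffOn hU (hQ β α))))]
    refine Finset.sum_congr rfl fun β _ => ?_
    rw [pdx_add hU hp ((pdx_contDiffOn hU (hQ α β)).mul (hQ β α))
      ((hQ α β).mul (pdx_contDiffOn hU (hQ β α))),
      pdx_mul hU hp (pdx_contDiffOn hU (hQ α β)) (hQ β α),
      pdx_mul hU hp (hQ α β) (pdx_contDiffOn hU (hQ β α))]
  rw [A1, A3]
  simp only [A2 p hp]
  -- symmetry of spatial gradient
  have hs : ∀ γ α β : Fin 3, pdx γ (fun q => Q q α β) p = pdx γ (fun q => Q q β α) p :=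
    fun γ α β => pdx_congr_on hU hp (fun q hq => (hQsym q hq).apply β α)
  have htr : Q p 0 0 + Q p 1 1 + Q p 2 2 = 0 := by
    simpa [Matrix.trace, Matrix.diag, Fin.sum_univ_three] using hQtr p hp
  have h00 := heq p hp 0 0
  have h01 := heq p hp 0 1
  have h02 := heq p hp 0 2
  have h10 := heq p hp 1 0
  have h11 := heq p hp 1 1
  have h12 := heq p hp 1 2
  have h20 := heq p hp 2 0
  have h21 := heq p hp 2 1
  have h22 := heq p hp 2 2
  simp only [lapx, fLdG, Matrix.trace, Matrix.diag, Matrix.mul_apply, Matrix.sub_apply,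
    Matrix.add_apply, Matrix.smul_apply, Matrix.one_apply, smul_eq_mul, Fin.sum_univ_three,
    Fin.isValue, if_true, if_false, one_ne_zero, zero_ne_one, Fin.reduceEq, reduceIte,
    mul_one, mul_zero] at h00 h01 h02 h10 h11 h12 h20 h21 h22 ⊢
  linear_combination (2 * Q p 0 0) * h00 +
    (2 * Q p 1 0) * h01 +
    (2 * Q p 2 0) * h02 +
    (2 * Q p 0 1) * h10 +
    (2 * Q p 1 1) * h11 +
    (2 * Q p 2 1) * h12 +
    (2 * Q p 0 2) * h20 +
    (2 * Q p 1 2) * h21 +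
    (2 * Q p 2 2) * h22 +
    (-(2 * b * (Q p 0 0 * Q p 0 0 + Q p 0 1 * Q p 1 0 + Q p 0 2 * Q p 2 0 + Q p 1 0 * Q p 0 1 + Q p 1 1 * Q p 1 1 + Q p 1 2 * Q p 2 1 + Q p 2 0 * Q p 0 2 + Q p 2 1 * Q p 1 2 + Q p 2 2 * Q p 2 2) / 3)) * htr +
    (2 * pdx 0 (fun q => Q q 0 1) p) * hs 0 0 1 +
    (2 * pdx 0 (fun q => Q q 0 2) p) * hs 0 0 2 +
    (2 * pdx 0 (fun q => Q q 1 0) p) * hs 0 1 0 +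
    (2 * pdx 0 (fun q => Q q 1 2) p) * hs 0 1 2 +
    (2 * pdx 0 (fun q => Q q 2 0) p) * hs 0 2 0 +
    (2 * pdx 0 (fun q => Q q 2 1) p) * hs 0 2 1 +
    (2 * pdx 1 (fun q => Q q 0 1) p) * hs 1 0 1 +
    (2 * pdx 1 (fun q => Q q 0 2) p) * hs 1 0 2 +
    (2 * pdx 1 (fun q => Q q 1 0) p) * hs 1 1 0 +
    (2 * pdx 1 (fun q => Q q 1 2) p) * hs 1 1 2 +
    (2 * pdx 1 (fun q => Q q 2 0) p) * hs 1 2 0 +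
    (2 * pdx 1 (fun q => Q q 2 1) p) * hs 1 2 1 +
    (2 * pdx 2 (fun q => Q q 0 1) p) * hs 2 0 1 +
    (2 * pdx 2 (fun q => Q q 0 2) p) * hs 2 0 2 +
    (2 * pdx 2 (fun q => Q q 1 0) p) * hs 2 1 0 +
    (2 * pdx 2 (fun q => Q q 1 2) p) * hs 2 1 2 +
    (2 * pdx 2 (fun q => Q q 2 0) p) * hs 2 2 0 +
    (2 * pdx 2 (fun q => Q q 2 1) p) * hs 2 2 1
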